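/- Let d ≥ 1, k ≥ 1, β > 0, Δ > 0, let w^1, …, w^k ∈ ℝ^d be unit vectors and u_1, …, u_k ∈ [−1, 1], and define w̄(ξ) = Σ_{ℓ=1}^k u_ℓ E_ξ[f'(⟨w^ℓ, X⟩)] w^ℓ, where f'(x) = β(1 − tanh²(βx)) and E_ξ is expectation over X ~ N(ξ, I_{d×d}). Fix ℓ₀ ∈ {1, …, k}. If ξ ∈ ℝ^d satisfies |⟨w^ℓ, ξ⟩| ≥ Δ for every ℓ ≠ ℓ₀, then ‖w̄(ξ) − a_{ℓ₀} w^{ℓ₀}‖₂ ≤ 8kβ e^{2β² − 2βΔ}, where a_{ℓ₀} = u_{ℓ₀} E_ξ[f'(⟨w^{ℓ₀}, X⟩)]. -/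

import Mathlib

open MeasureTheory ProbabilityTheory Real
open scoped NNReal RealInnerProductSpace

/-- The Gaussian measure on `EuclideanSpace ℝ (Fin d)` with mean `ξ` and covariance
`σ2` times the identity (i.e. i.i.d. `N(ξ i, σ2)` coordinates). -/
noncomputable def gaussE (d : ℕ) (ξ : EuclideanSpace ℝ (Fin d)) (σ2 : ℝ≥0) :
    Measure (EuclideanSpace ℝ (Fin d)) :=
  (Measure.pi fun i : Fin d => gaussianReal (ξ i) σ2).map
    (MeasurableEquiv.toLp 2 (Fin d → ℝ))

/- ### Auxiliary lemmas -/

private lemma one_sub_tanh_sq' (x : ℝ) : 1 - Real.tanh x ^ 2 = (Real.cosh x ^ 2)⁻¹ := by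
  rw [Real.tanh_eq_sinh_div_cosh, div_pow, Real.sinh_sq]
  field_simp [(Real.cosh_pos x).ne']
  ring

private lemma tanh_sq_bound' (x : ℝ) : 1 - Real.tanh x ^ 2 ≤ 4 * Real.exp (-(2 * |x|)) := by
  rw [one_sub_tanh_sq']
  have h1 : Real.exp |x| / 2 ≤ Real.cosh x := by
    rcases abs_cases x with ⟨h, _⟩ | ⟨h, _⟩ <;> rw [h, Real.cosh_eq]
    · nlinarith [Real.exp_pos (-x)]
    · nlinarith [Real.exp_pos x]
  have h2 : (0:ℝ) < Real.exp |x| / 2 := by positivity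
  have h3 : (Real.cosh x ^ 2)⁻¹ ≤ ((Real.exp |x| / 2) ^ 2)⁻¹ := by
    apply inv_anti₀ (by positivity)
    exact pow_le_pow_left₀ h2.le h1 2
  refine h3.trans_eq ?_
  rw [div_pow, ← Real.exp_nat_mul, Real.exp_neg]
  have : Real.exp (2 * |x|) = Real.exp ((2:ℕ) * |x|) := by norm_num
  rw [this]
  field_simp
  ring

private lemma pdf_shift' (m t x : ℝ) :
    gaussianPDFReal m 1 x * Real.exp (t * x)
      = Real.exp (t * m + t ^ 2 / 2) * gaussianPDFReal (m + t) 1 x := by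
  simp only [gaussianPDFReal, NNReal.coe_one, mul_one]
  rw [mul_assoc, ← Real.exp_add, mul_left_comm, ← Real.exp_add]
  congr 2
  ring

private lemma gaussianReal_one' (m : ℝ) : gaussianReal m 1 = volume.withDensity
    (fun x => ((gaussianPDFReal m 1 x).toNNReal : ENNReal)) := by
  rw [gaussianReal_of_var_ne_zero _ one_ne_zero]
  rfl

private lemma smul_eq'' (m t x : ℝ) : (gaussianPDFReal m 1 x).toNNReal • Real.exp (t * x)
    = Real.exp (t * m + t ^ 2 / 2) * gaussianPDFReal (m + t) 1 x := by
  rw [NNReal.smul_def, smul_eq_mul, Real.coe_toNNReal _ (gaussianPDFReal_nonneg m 1 x)]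
  exact pdf_shift' m t x

private lemma gauss1_integrable' (m t : ℝ) :
    Integrable (fun x => Real.exp (t * x)) (gaussianReal m 1) := by
  rw [gaussianReal_one',
    integrable_withDensity_iff_integrable_smul ((measurable_gaussianPDFReal m 1).real_toNNReal)]
  simp only [smul_eq'']
  exact (integrable_gaussianPDFReal (m + t) 1).const_mul _

private lemma gauss1_integral' (m t : ℝ) :
    ∫ x, Real.exp (t * x) ∂(gaussianReal m 1) = Real.exp (t * m + t ^ 2 / 2) := by
  rw [gaussianReal_one',
    integral_withDensity_eq_integral_smul ((measurable_gaussianPDFReal m 1).real_toNNReal)]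
  simp only [smul_eq'']
  rw [integral_const_mul, integral_gaussianPDFReal_eq_one (m + t) one_ne_zero, mul_one]

private lemma pi_integrable' (d : ℕ) (μ : Fin d → Measure ℝ) [h : ∀ i, SigmaFinite (μ i)]
    (f : Fin d → ℝ → ℝ) (hf : ∀ i, Integrable (f i) (μ i)) :
    Integrable (fun x : Fin d → ℝ => ∏ i, f i (x i)) (Measure.pi μ) :=
  MeasureTheory.Integrable.fintype_prod_dep (E := fun _ => ℝ) (f := f) (μ := μ) hf

private lemma pi_integral' (d : ℕ) (μ : Fin d → Measure ℝ) [h : ∀ i, SigmaFinite (μ i)]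
    (f : Fin d → ℝ → ℝ) :
    ∫ x : Fin d → ℝ, ∏ i, f i (x i) ∂(Measure.pi μ) = ∏ i, ∫ y, f i y ∂(μ i) :=
  MeasureTheory.integral_fintype_prod_eq_prod (E := fun _ => ℝ) f (μ := μ)

private lemma inner_expand' (d : ℕ) (w : EuclideanSpace ℝ (Fin d)) (x : Fin d → ℝ) :
    ⟪w, (MeasurableEquiv.toLp 2 (Fin d → ℝ)) x⟫ = ∑ i, w i * x i := by
  simp [PiLp.inner_apply]
  exact Finset.sum_congr rfl (fun i _ => mul_comm _ _)

private lemma sum_sq' (d : ℕ) (w : EuclideanSpace ℝ (Fin d)) (hw : ‖w‖ = 1) :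
    ∑ i, w i ^ 2 = 1 := by
  have := EuclideanSpace.norm_eq w
  rw [hw] at this
  have h2 : ∑ i, ‖w i‖ ^ 2 = 1 := by
    have hn : (0:ℝ) ≤ ∑ i, ‖w i‖ ^ 2 := by positivity
    nlinarith [Real.sq_sqrt hn, Real.sqrt_nonneg (∑ i, ‖w i‖ ^ 2)]
  simpa [Real.norm_eq_abs, sq_abs] using h2

private lemma exp_prod_form' (d : ℕ) (w : EuclideanSpace ℝ (Fin d)) (c : ℝ) (x : Fin d → ℝ) :
    Real.exp (c * ⟪w, (MeasurableEquiv.toLp 2 (Fin d → ℝ)) x⟫)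
      = ∏ i, Real.exp ((c * w i) * x i) := by
  rw [inner_expand', ← Real.exp_sum, Finset.mul_sum]
  ring_nf

private lemma gaussE_exp_integrable' (d : ℕ) (ξ : EuclideanSpace ℝ (Fin d))
    (w : EuclideanSpace ℝ (Fin d)) (c : ℝ) :
    Integrable (fun x => Real.exp (c * ⟪w, x⟫)) (gaussE d ξ 1) := by
  rw [gaussE, integrable_map_equiv]
  have : ((fun x => Real.exp (c * ⟪w, x⟫)) ∘ (MeasurableEquiv.toLp 2 (Fin d → ℝ)))
      = fun x : Fin d → ℝ => ∏ i, Real.exp ((c * w i) * x i) := by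
    funext x; exact exp_prod_form' d w c x
  rw [this]
  exact pi_integrable' d _ _ (fun i => gauss1_integrable' (ξ i) (c * w i))

private lemma gaussE_exp_integral' (d : ℕ) (ξ : EuclideanSpace ℝ (Fin d))
    (w : EuclideanSpace ℝ (Fin d)) (hw : ‖w‖ = 1) (c : ℝ) :
    ∫ x, Real.exp (c * ⟪w, x⟫) ∂(gaussE d ξ 1) = Real.exp (c * ⟪w, ξ⟫ + c ^ 2 / 2) := by
  rw [gaussE, integral_map_equiv]
  simp_rw [exp_prod_form' d w c]
  rw [pi_integral' d _ (fun i y => Real.exp ((c * w i) * y))]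
  simp_rw [gauss1_integral']
  rw [← Real.exp_sum]
  congr 1
  have h1 : ⟪w, ξ⟫ = ∑ i, w i * ξ i := by simp [PiLp.inner_apply, mul_comm]
  rw [h1, Finset.sum_add_distrib, Finset.mul_sum]
  have h2 : ∑ i, (c * w i) ^ 2 / 2 = c ^ 2 / 2 := by
    have h3 : ∑ i, (c * w i) ^ 2 / 2 = c ^ 2 / 2 * ∑ i, w i ^ 2 := by
      rw [Finset.mul_sum]
      exact Finset.sum_congr rfl (fun i _ => by ring)
    rw [h3, sum_sq' d w hw, mul_one]
  rw [h2]
  congr 1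
  exact Finset.sum_congr rfl (fun i _ => by ring)

private lemma integrand_nonneg' (β t : ℝ) (hβ : 0 < β) :
    0 ≤ β * (1 - Real.tanh t ^ 2) := by
  have := one_sub_tanh_sq' t
  have h2 : (0:ℝ) ≤ (Real.cosh t ^ 2)⁻¹ := by positivity
  nlinarith

private lemma integral_I_nonneg (d : ℕ) (ξ : EuclideanSpace ℝ (Fin d))
    (w : EuclideanSpace ℝ (Fin d)) (β : ℝ) (hβ : 0 < β) :
    0 ≤ ∫ x, β * (1 - Real.tanh (β * ⟪w, x⟫) ^ 2) ∂(gaussE d ξ 1) :=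
  integral_nonneg (fun x => integrand_nonneg' β _ hβ)

private lemma integral_I_le (d : ℕ) (ξ : EuclideanSpace ℝ (Fin d))
    (w : EuclideanSpace ℝ (Fin d)) (hw : ‖w‖ = 1) (β Δ : ℝ) (hβ : 0 < β)
    (hm : Δ ≤ |⟪w, ξ⟫|) :
    ∫ x, β * (1 - Real.tanh (β * ⟪w, x⟫) ^ 2) ∂(gaussE d ξ 1)
      ≤ 4 * β * Real.exp (2 * β ^ 2 - 2 * β * Δ) := by
  set m : ℝ := ⟪w, ξ⟫ with hmdef
  set s : ℝ := if 0 ≤ m then 1 else -1 with hsdef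
  have hsm : s * m = |m| := by
    rcases le_or_gt 0 m with h | h
    · rw [hsdef, if_pos h, one_mul, abs_of_nonneg h]
    · rw [hsdef, if_neg (not_le.mpr h), abs_of_neg h]; ring
  have hss : s ^ 2 = 1 := by
    rcases le_or_gt 0 m with h | h
    · rw [hsdef, if_pos h]; norm_num
    · rw [hsdef, if_neg (not_le.mpr h)]; norm_num
  set c : ℝ := -(2 * β * s) with hcdef
  have hint : Integrable (fun x => 4 * β * Real.exp (c * ⟪w, x⟫)) (gaussE d ξ 1) :=
    (gaussE_exp_integrable' d ξ w c).const_mul _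
  have hle : ∀ x, β * (1 - Real.tanh (β * ⟪w, x⟫) ^ 2) ≤ 4 * β * Real.exp (c * ⟪w, x⟫) := by
    intro x
    set t : ℝ := ⟪w, x⟫
    have h1 : 1 - Real.tanh (β * t) ^ 2 ≤ 4 * Real.exp (-(2 * |β * t|)) := tanh_sq_bound' _
    have h2 : Real.exp (-(2 * |β * t|)) ≤ Real.exp (c * t) := by
      apply Real.exp_le_exp.mpr
      have hst : s * t ≤ |t| := by
        calc s * t ≤ |s * t| := le_abs_self _
        _ = |s| * |t| := abs_mul s t
        _ = |t| := by
            rcases le_or_gt 0 m with h | h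
            · rw [hsdef, if_pos h]; simp
            · rw [hsdef, if_neg (not_le.mpr h)]; simp
      have : |β * t| = β * |t| := by rw [abs_mul, abs_of_pos hβ]
      rw [this, hcdef]
      nlinarith
    nlinarith [Real.exp_pos (-(2 * |β * t|)), Real.exp_pos (c * t)]
  have key := integral_mono_of_nonneg
    (f := fun x => β * (1 - Real.tanh (β * ⟪w, x⟫) ^ 2))
    (g := fun x => 4 * β * Real.exp (c * ⟪w, x⟫))
    (Filter.Eventually.of_forall (fun x => integrand_nonneg' β _ hβ)) hint
    (Filter.Eventually.of_forall hle)
  refine key.trans ?_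
  rw [integral_const_mul, gaussE_exp_integral' d ξ w hw c]
  have h3 : c * m + c ^ 2 / 2 = 2 * β ^ 2 - 2 * β * |m| := by
    rw [hcdef]
    have : (-(2 * β * s)) ^ 2 = 4 * β ^ 2 * s ^ 2 := by ring
    have h4 : (-(2 * β * s)) * m = -(2 * β * (s * m)) := by ring
    rw [h4, hsm, this, hss]
    ring
  rw [← hmdef, h3]
  have h5 : 2 * β ^ 2 - 2 * β * |m| ≤ 2 * β ^ 2 - 2 * β * Δ := by nlinarith
  have := Real.exp_le_exp.mpr h5
  nlinarith [Real.exp_pos (2 * β ^ 2 - 2 * β * |m|)]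

/-- If `ξ` is far from normal to every `w^ℓ` with `ℓ ≠ ℓ₀`, then
`‖w̄(ξ) - a_{ℓ₀} w^{ℓ₀}‖ ≤ 8kβ e^{2β² - 2βΔ}` with `a_{ℓ₀} = u_{ℓ₀} E_ξ[f'(⟨w^{ℓ₀}, X⟩)]`. -/
theorem stmt14 (d k : ℕ) (hd : 1 ≤ d) (hk : 1 ≤ k) (β Δ : ℝ) (hβ : 0 < β) (hΔ : 0 < Δ)
    (w : Fin k → EuclideanSpace ℝ (Fin d)) (hw : ∀ ℓ, ‖w ℓ‖ = 1)
    (u : Fin k → ℝ) (hu : ∀ ℓ, u ℓ ∈ Set.Icc (-1 : ℝ) 1)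
    (ξ : EuclideanSpace ℝ (Fin d)) (ℓ₀ : Fin k)
    (hξ : ∀ ℓ, ℓ ≠ ℓ₀ → Δ ≤ |⟪w ℓ, ξ⟫|) :
    ‖(∑ ℓ, (u ℓ * ∫ x, β * (1 - Real.tanh (β * ⟪w ℓ, x⟫) ^ 2) ∂(gaussE d ξ 1)) • w ℓ)
        - (u ℓ₀ * ∫ x, β * (1 - Real.tanh (β * ⟪w ℓ₀, x⟫) ^ 2) ∂(gaussE d ξ 1)) • w ℓ₀‖
      ≤ 8 * k * β * Real.exp (2 * β ^ 2 - 2 * β * Δ) := by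
  set I : Fin k → ℝ :=
    fun ℓ => ∫ x, β * (1 - Real.tanh (β * ⟪w ℓ, x⟫) ^ 2) ∂(gaussE d ξ 1) with hI
  set B : ℝ := 4 * β * Real.exp (2 * β ^ 2 - 2 * β * Δ) with hB
  have hB0 : 0 ≤ B := by positivity
  have hsplit : (∑ ℓ, (u ℓ * I ℓ) • w ℓ) - (u ℓ₀ * I ℓ₀) • w ℓ₀
      = ∑ ℓ ∈ Finset.univ.erase ℓ₀, (u ℓ * I ℓ) • w ℓ := by
    rw [← Finset.sum_erase_add Finset.univ _ (Finset.mem_univ ℓ₀)]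
    abel
  rw [hsplit]
  have hterm : ∀ ℓ ∈ Finset.univ.erase ℓ₀, ‖(u ℓ * I ℓ) • w ℓ‖ ≤ B := by
    intro ℓ hℓ
    have hne : ℓ ≠ ℓ₀ := (Finset.mem_erase.mp hℓ).1
    have hIℓ : I ℓ ≤ B := integral_I_le d ξ (w ℓ) (hw ℓ) β Δ hβ (hξ ℓ hne)
    have hI0 : 0 ≤ I ℓ := integral_I_nonneg d ξ (w ℓ) β hβ
    have hu1 : |u ℓ| ≤ 1 := abs_le.mpr ⟨(hu ℓ).1, (hu ℓ).2⟩
    rw [norm_smul, hw ℓ, mul_one, Real.norm_eq_abs, abs_mul, abs_of_nonneg hI0]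
    nlinarith
  calc ‖∑ ℓ ∈ Finset.univ.erase ℓ₀, (u ℓ * I ℓ) • w ℓ‖
      ≤ ∑ ℓ ∈ Finset.univ.erase ℓ₀, ‖(u ℓ * I ℓ) • w ℓ‖ := norm_sum_le _ _
    _ ≤ ∑ _ℓ ∈ Finset.univ.erase ℓ₀, B := Finset.sum_le_sum hterm
    _ = ((Finset.univ.erase ℓ₀).card : ℝ) * B := by rw [Finset.sum_const, nsmul_eq_mul]
    _ ≤ (k : ℝ) * B := by
        apply mul_le_mul_of_nonneg_right _ hB0
        have : (Finset.univ.erase ℓ₀).card ≤ k := by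
          calc (Finset.univ.erase ℓ₀).card ≤ (Finset.univ : Finset (Fin k)).card :=
            Finset.card_le_card (Finset.erase_subset _ _)
          _ = k := by simp
        exact_mod_cast this
    _ ≤ 8 * k * β * Real.exp (2 * β ^ 2 - 2 * β * Δ) := by
        rw [hB]
        have hk1 : (1:ℝ) ≤ k := by exact_mod_cast hk
        nlinarith [Real.exp_pos (2 * β ^ 2 - 2 * β * Δ)]
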